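/- For every n ≥ 3 there exists a nonzero polynomial p in n variables over ℂ such that for every tuple t = (t₁, …, tₙ) ∈ (ℂ×)ⁿ with p(t) ≠ 0, the set S = {t₁, …, tₙ} satisfies |δ²S| = f(n). (Equivalently, the set of very regular elements T^{vr} = {t ∈ (ℂ×)ⁿ : |δ²{t₁,…,tₙ}| = f(n)} contains a nonempty Zariski open subset of the torus, and in particular is Zariski dense.) -/

import Mathlib

open scoped Pointwise
open Finset

set_option maxHeartbeats 1000000

/-- `f(n) = n(n-1)(n-2)(n-3)/4 + n(n-1)(n-2) + 2n(n-1) + 1`. -/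
def fBound (n : ℕ) : ℕ :=
  n * (n - 1) * (n - 2) * (n - 3) / 4 + n * (n - 1) * (n - 2) + 2 * (n * (n - 1)) + 1

namespace VR

variable {n : ℕ}

abbrev Quad (n : ℕ) := Fin n × Fin n × Fin n × Fin n
def E (x : Fin n) : Fin n → ℤ := fun i => if i = x then 1 else 0
def g (q : Quad n) : Fin n → ℤ := fun i =>
  E q.1 i + E q.2.2.2 i - E q.2.1 i - E q.2.2.1 i
def V (n : ℕ) : Finset (Fin n → ℤ) := Finset.image g Finset.univ
def al : Fin 5 → ℤ := ![1, 2, 2, 1, 1]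
def be : Fin 5 → ℤ := ![1, 2, 1, 2, 1]
def sz1 : Fin 5 → ℕ := ![1, 1, 1, 2, 2]
def sz2 : Fin 5 → ℕ := ![1, 1, 2, 1, 2]
def psi (k : Fin 5) (s s' : Finset (Fin n)) : Fin n → ℤ :=
  fun i => if i ∈ s then al k else if i ∈ s' then - be k else 0
def W (n : ℕ) : Finset (Fin 5 × Finset (Fin n) × Finset (Fin n)) :=
  Finset.univ.filter
    (fun z => Disjoint z.2.1 z.2.2 ∧ z.2.1.card = sz1 z.1 ∧ z.2.2.card = sz2 z.1)

lemma mem_psi_image {k : Fin 5} {s s' : Finset (Fin n)} (hd : Disjoint s s')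
    (h1 : s.card = sz1 k) (h2 : s'.card = sz2 k) :
    psi k s s' ∈ (W n).image (fun z => psi z.1 z.2.1 z.2.2) :=
  Finset.mem_image.mpr ⟨(k, s, s'), Finset.mem_filter.mpr ⟨Finset.mem_univ _, hd, h1, h2⟩, rfl⟩

lemma cover (hn : 0 < n) :
    V n = insert 0 ((W n).image (fun z => psi z.1 z.2.1 z.2.2)) := by
  apply Finset.Subset.antisymm
  · intro v hv
    obtain ⟨⟨a, b, c, d⟩, -, rfl⟩ := Finset.mem_image.mp hv
    rw [Finset.mem_insert]
    by_cases hab : a = b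
    · by_cases hdc : d = c
      · left; funext i; simp [g, E, hab, hdc]
      · right
        have : g (a, b, c, d) = psi 0 {d} {c} := by
          funext i
          simp only [g, E, psi, al, be, Finset.mem_singleton, hab]
          split_ifs <;> simp_all <;> omega
        rw [this]
        exact mem_psi_image (Finset.disjoint_singleton.mpr hdc) (by simp [sz1]) (by simp [sz2])
    · by_cases hac : a = c
      · by_cases hdb : d = b
        · left; funext i; simp only [g, E, hac, hdb, Pi.zero_apply]; split_ifs <;> omega
        · right
          have : g (a, b, c, d) = psi 0 {d} {b} := by
            funext i
            simp only [g, E, psi, al, be, Finset.mem_singleton, hac]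
            split_ifs <;> simp_all <;> omega
          rw [this]
          exact mem_psi_image (Finset.disjoint_singleton.mpr hdb) (by simp [sz1]) (by simp [sz2])
      · by_cases hdb : d = b
        · right
          have : g (a, b, c, d) = psi 0 {a} {c} := by
            funext i
            simp only [g, E, psi, al, be, Finset.mem_singleton, hdb]
            split_ifs <;> simp_all <;> omega
          rw [this]
          exact mem_psi_image (Finset.disjoint_singleton.mpr hac) (by simp [sz1]) (by simp [sz2])
        · by_cases hdc : d = c
          · right
            have : g (a, b, c, d) = psi 0 {a} {b} := by
              funext i
              simp only [g, E, psi, al, be, Finset.mem_singleton, hdc]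
              split_ifs <;> simp_all <;> omega
            rw [this]
            exact mem_psi_image (Finset.disjoint_singleton.mpr hab) (by simp [sz1]) (by simp [sz2])
          · right
            by_cases had : a = d
            · by_cases hbc : b = c
              · have : g (a, b, c, d) = psi 1 {a} {b} := by
                  funext i
                  simp only [g, E, psi, al, be, Finset.mem_singleton, had, hbc]
                  split_ifs <;> simp_all <;> omega
                rw [this]
                exact mem_psi_image (Finset.disjoint_singleton.mpr hab) (by simp [sz1])
                  (by simp [sz2])
              · have : g (a, b, c, d) = psi 2 {a} {b, c} := by
                  funext i
                  simp only [g, E, psi, al, be, Finset.mem_singleton, Finset.mem_insert, had]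
                  split_ifs <;> simp_all <;> omega
                rw [this]
                exact mem_psi_image (Finset.disjoint_singleton_left.mpr (by simp [hab, hac]))
                  (by simp [sz1]) (by rw [Finset.card_pair hbc]; simp [sz2])
            · by_cases hbc : b = c
              · have : g (a, b, c, d) = psi 3 {a, d} {b} := by
                  funext i
                  simp only [g, E, psi, al, be, Finset.mem_singleton, Finset.mem_insert, hbc]
                  split_ifs <;> simp_all <;> omega
                rw [this]
                exact mem_psi_image
                  (Finset.disjoint_singleton_right.mpr (by simp [Ne.symm hab, Ne.symm hdb]))
                  (by rw [Finset.card_pair had]; simp [sz1]) (by simp [sz2])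
              · have : g (a, b, c, d) = psi 4 {a, d} {b, c} := by
                  funext i
                  simp only [g, E, psi, al, be, Finset.mem_singleton, Finset.mem_insert]
                  split_ifs <;> simp_all <;> omega
                rw [this]
                refine mem_psi_image ?_ (by rw [Finset.card_pair had]; simp [sz1])
                  (by rw [Finset.card_pair hbc]; simp [sz2])
                rw [Finset.disjoint_left]
                rintro u hu hv
                simp only [Finset.mem_insert, Finset.mem_singleton] at hu hv
                rcases hu with rfl | rfl <;> tauto
  · intro v hv
    rw [Finset.mem_insert] at hv
    rcases hv with rfl | hv
    · refine Finset.mem_image.mpr ⟨(⟨0, hn⟩, ⟨0, hn⟩, ⟨0, hn⟩, ⟨0, hn⟩), Finset.mem_univ _, ?_⟩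
      funext i
      simp only [g, Pi.zero_apply]
      ring
    · obtain ⟨⟨k, s, s'⟩, hz, rfl⟩ := Finset.mem_image.mp hv
      simp only [W, Finset.mem_filter] at hz
      obtain ⟨-, hd, hc1, hc2⟩ := hz
      apply Finset.mem_image.mpr
      fin_cases k
      · simp only [sz1, sz2] at hc1 hc2
        obtain ⟨x, rfl⟩ := Finset.card_eq_one.mp (by simpa using hc1)
        obtain ⟨y, rfl⟩ := Finset.card_eq_one.mp (by simpa using hc2)
        have hxy : x ≠ y := by rintro rfl; simp at hd
        refine ⟨(x, y, x, x), Finset.mem_univ _, ?_⟩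
        funext i
        simp only [g, E, psi, al, be, Finset.mem_singleton]
        split_ifs <;> simp_all <;> omega
      · simp only [sz1, sz2] at hc1 hc2
        obtain ⟨x, rfl⟩ := Finset.card_eq_one.mp (by simpa using hc1)
        obtain ⟨y, rfl⟩ := Finset.card_eq_one.mp (by simpa using hc2)
        have hxy : x ≠ y := by rintro rfl; simp at hd
        refine ⟨(x, y, y, x), Finset.mem_univ _, ?_⟩
        funext i
        simp only [g, E, psi, al, be, Finset.mem_singleton]
        split_ifs <;> simp_all <;> omega
      · simp only [sz1, sz2] at hc1 hc2
        obtain ⟨x, rfl⟩ := Finset.card_eq_one.mp (by simpa using hc1)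
        obtain ⟨y, z, hyz, rfl⟩ := Finset.card_eq_two.mp (by simpa using hc2)
        rw [Finset.disjoint_left] at hd
        have hxy : x ≠ y := fun h => @hd x (by simp) (by rw [h]; simp)
        have hxz : x ≠ z := fun h => @hd x (by simp) (by rw [h]; simp)
        refine ⟨(x, y, z, x), Finset.mem_univ _, ?_⟩
        funext i
        simp only [g, E, psi, al, be, Finset.mem_singleton, Finset.mem_insert]
        split_ifs <;> simp_all <;> omega
      · simp only [sz1, sz2] at hc1 hc2
        obtain ⟨x, y, hxy, rfl⟩ := Finset.card_eq_two.mp (by simpa using hc1)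
        obtain ⟨z, rfl⟩ := Finset.card_eq_one.mp (by simpa using hc2)
        rw [Finset.disjoint_left] at hd
        have hxz : x ≠ z := fun h => @hd x (by simp) (by rw [h]; simp)
        have hyz : y ≠ z := fun h => @hd y (by simp) (by rw [h]; simp)
        refine ⟨(x, z, z, y), Finset.mem_univ _, ?_⟩
        funext i
        simp only [g, E, psi, al, be, Finset.mem_singleton, Finset.mem_insert]
        split_ifs <;> simp_all <;> omega
      · simp only [sz1, sz2] at hc1 hc2
        obtain ⟨x, y, hxy, rfl⟩ := Finset.card_eq_two.mp (by simpa using hc1)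
        obtain ⟨z, w, hzw, rfl⟩ := Finset.card_eq_two.mp (by simpa using hc2)
        rw [Finset.disjoint_left] at hd
        have hxz : x ≠ z := fun h => @hd x (by simp) (by rw [h]; simp)
        have hxw : x ≠ w := fun h => @hd x (by simp) (by rw [h]; simp)
        have hyz : y ≠ z := fun h => @hd y (by simp) (by rw [h]; simp)
        have hyw : y ≠ w := fun h => @hd y (by simp) (by rw [h]; simp)
        refine ⟨(x, z, w, y), Finset.mem_univ _, ?_⟩
        funext i
        simp only [g, E, psi, al, be, Finset.mem_singleton, Finset.mem_insert]
        split_ifs <;> simp_all <;> omega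

lemma al_pos (k : Fin 5) : 0 < al k := by fin_cases k <;> simp [al]
lemma be_pos (k : Fin 5) : 0 < be k := by fin_cases k <;> simp [be]
lemma sz1_pos (k : Fin 5) : 0 < sz1 k := by fin_cases k <;> simp [sz1]
lemma sz2_pos (k : Fin 5) : 0 < sz2 k := by fin_cases k <;> simp [sz2]

lemma psi_pos_iff {k : Fin 5} {s s' : Finset (Fin n)} (hd : Disjoint s s') (i : Fin n) :
    0 < psi k s s' i ↔ i ∈ s := by
  unfold psi
  by_cases hi : i ∈ s
  · simp [hi, al_pos k]
  · by_cases hi' : i ∈ s'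
    · simp [hi, hi']; have := be_pos k; omega
    · simp [hi, hi']

lemma psi_neg_iff {k : Fin 5} {s s' : Finset (Fin n)} (hd : Disjoint s s') (i : Fin n) :
    psi k s s' i < 0 ↔ i ∈ s' := by
  unfold psi
  by_cases hi : i ∈ s
  · have : i ∉ s' := fun h => (Finset.disjoint_left.mp hd hi) h
    simp [hi, this]; have := al_pos k; omega
  · by_cases hi' : i ∈ s'
    · simp [hi, hi']; exact be_pos k
    · simp [hi, hi']

lemma psi_injOn :
    Set.InjOn (fun z : Fin 5 × Finset (Fin n) × Finset (Fin n) => psi z.1 z.2.1 z.2.2)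
      (W n : Set _) := by
  rintro ⟨k, s, s'⟩ hz ⟨k', t, t'⟩ hw h
  simp only [W, Finset.coe_filter, Set.mem_setOf_eq] at hz hw
  obtain ⟨-, hd, hc1, hc2⟩ := hz
  obtain ⟨-, hd', hc1', hc2'⟩ := hw
  simp only at h
  have hst : s = t := by
    ext i
    rw [← psi_pos_iff (k := k) (s' := s') hd i, h, psi_pos_iff hd' i]
  have hst' : s' = t' := by
    ext i
    rw [← psi_neg_iff (k := k) (s := s) hd i, h, psi_neg_iff hd' i]
  subst hst; subst hst'
  obtain ⟨i, hi⟩ := Finset.card_pos.mp (hc1 ▸ sz1_pos k)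
  obtain ⟨j, hj⟩ := Finset.card_pos.mp (hc2 ▸ sz2_pos k)
  have hal : al k = al k' := by
    have := congrFun h i
    simpa [psi, hi] using this
  have hbe : be k = be k' := by
    have hjs : j ∉ s := fun hh => (Finset.disjoint_left.mp hd hh) hj
    have := congrFun h j
    simp only [psi, if_neg hjs, if_pos hj] at this
    omega
  have hk : k = k' := by
    have h1 : sz1 k = sz1 k' := by omega
    have h2 : sz2 k = sz2 k' := by omega
    fin_cases k <;> fin_cases k' <;> simp_all [al, be, sz1, sz2]
  subst hk; rfl

lemma zero_not_mem :
    (0 : Fin n → ℤ) ∉ (W n).image (fun z => psi z.1 z.2.1 z.2.2) := by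
  rw [Finset.mem_image]
  rintro ⟨⟨k, s, s'⟩, hz, h⟩
  simp only [W, Finset.mem_filter] at hz
  obtain ⟨-, hd, hc1, hc2⟩ := hz
  obtain ⟨i, hi⟩ := Finset.card_pos.mp (hc1 ▸ sz1_pos k)
  have := congrFun h i
  simp only [psi, if_pos hi, Pi.zero_apply] at this
  have := al_pos k
  omega

def DP (n p q : ℕ) : Finset (Finset (Fin n) × Finset (Fin n)) :=
  (((Finset.univ : Finset (Fin n)).powersetCard p) ×ˢ
      ((Finset.univ : Finset (Fin n)).powersetCard q)).filter
    (fun z => Disjoint z.1 z.2)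

lemma card_DP (p q : ℕ) : (DP n p q).card = n.choose p * (n - p).choose q := by
  rw [Finset.card_eq_sum_card_fiberwise (f := Prod.fst)
      (t := (Finset.univ : Finset (Fin n)).powersetCard p)
      (fun z hz => by
        exact (Finset.mem_product.mp (Finset.mem_filter.mp hz).1).1)]
  have hconst : ∀ s ∈ (Finset.univ : Finset (Fin n)).powersetCard p,
      ((DP n p q).filter (fun z => z.1 = s)).card = (n - p).choose q := by
    intro s hs
    have hsc : s.card = p := by simpa [Finset.mem_powersetCard] using hs
    have himg : (DP n p q).filter (fun z => z.1 = s)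
        = Finset.image (fun s' => (s, s')) ((Finset.univ \ s).powersetCard q) := by
      ext ⟨u, v⟩
      simp only [DP, Finset.mem_filter, Finset.mem_product, Finset.mem_image,
        Finset.mem_powersetCard, Finset.subset_sdiff, Prod.mk.injEq]
      constructor
      · rintro ⟨⟨⟨-, hv, hq⟩, hd⟩, rfl⟩
        exact ⟨v, ⟨⟨hv, hd.symm⟩, hq⟩, rfl, rfl⟩
      · rintro ⟨s', ⟨⟨hs', hds⟩, hq⟩, rfl, rfl⟩
        exact ⟨⟨⟨⟨Finset.subset_univ _, hsc⟩, hs', hq⟩, hds.symm⟩, rfl⟩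
    rw [himg, Finset.card_image_of_injective _ (fun a b h => (Prod.mk.injEq _ _ _ _ ▸ h).2),
      Finset.card_powersetCard, Finset.card_sdiff_of_subset (Finset.subset_univ s),
      Finset.card_univ, Fintype.card_fin, hsc]
  rw [Finset.sum_congr rfl hconst, Finset.sum_const, Finset.card_powersetCard,
    Finset.card_univ, Fintype.card_fin, smul_eq_mul]

lemma W_card_eq :
    (W n).card = ∑ k : Fin 5, n.choose (sz1 k) * (n - sz1 k).choose (sz2 k) := by
  rw [Finset.card_eq_sum_card_fiberwise (f := Prod.fst) (t := Finset.univ)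
      (fun z _ => Finset.mem_univ _)]
  refine Finset.sum_congr rfl (fun k _ => ?_)
  have : (W n).filter (fun z => z.1 = k)
      = Finset.image (fun z : Finset (Fin n) × Finset (Fin n) => (k, z.1, z.2))
          (DP n (sz1 k) (sz2 k)) := by
    ext ⟨k', s, s'⟩
    simp only [W, DP, Finset.mem_filter, Finset.mem_image, Finset.mem_product,
      Finset.mem_univ, true_and, Finset.mem_powersetCard, Prod.mk.injEq]
    constructor
    · rintro ⟨⟨hd, h1, h2⟩, rfl⟩
      exact ⟨(s, s'), ⟨⟨⟨Finset.subset_univ _, h1⟩, Finset.subset_univ _, h2⟩, hd⟩,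
        rfl, rfl, rfl⟩
    · rintro ⟨⟨u, v⟩, ⟨⟨⟨-, h1⟩, -, h2⟩, hd⟩, rfl, rfl, rfl⟩
      exact ⟨⟨hd, h1, h2⟩, rfl⟩
  rw [this, Finset.card_image_of_injective _
    (fun a b h => by simpa [Prod.ext_iff] using h), card_DP]

lemma W_card (hn : 3 ≤ n) : (W n).card + 1 = fBound n := by
  rw [W_card_eq, Fin.sum_univ_five]
  simp only [sz1, sz2, Matrix.cons_val_zero, Matrix.cons_val_one, Matrix.head_cons,
    Matrix.cons_val_two, Matrix.tail_cons, Matrix.cons_val_three, Matrix.cons_val_four]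
  obtain ⟨e, he⟩ := Nat.even_mul_pred_self n
  obtain ⟨f, hf⟩ := Nat.even_mul_pred_self (n - 1)
  obtain ⟨g, hg⟩ := Nat.even_mul_pred_self (n - 2)
  have h11 : n - 1 - 1 = n - 2 := by omega
  have h21 : n - 2 - 1 = n - 3 := by omega
  rw [h11] at hf
  rw [h21] at hg
  have he' : n * (n - 1) = 2 * e := he.trans (two_mul e).symm
  have hf' : (n - 1) * (n - 2) = 2 * f := hf.trans (two_mul f).symm
  have hg' : (n - 2) * (n - 3) = 2 * g := hg.trans (two_mul g).symm
  have hC : n * (n - 1) / 2 = e := by rw [he', Nat.mul_div_cancel_left _ (by norm_num)]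
  have hB : (n - 1) * (n - 1 - 1) / 2 = f := by
    rw [h11, hf', Nat.mul_div_cancel_left _ (by norm_num)]
  have hD : (n - 2) * (n - 2 - 1) / 2 = g := by
    rw [h21, hg', Nat.mul_div_cancel_left _ (by norm_num)]
  have hA : n * (n - 1) * (n - 2) * (n - 3) / 4 = e * g := by
    have h4 : n * (n - 1) * (n - 2) * (n - 3) = 4 * (e * g) := by
      calc n * (n - 1) * (n - 2) * (n - 3) = (n * (n - 1)) * ((n - 2) * (n - 3)) := by ring
        _ = (2 * e) * (2 * g) := by rw [he', hg']
        _ = 4 * (e * g) := by ring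
    rw [h4, Nat.mul_div_cancel_left _ (by norm_num)]
  have hE : n * (n - 1) * (n - 2) = 2 * (e * (n - 2)) := by
    rw [he']; ring
  have hF : n * f = e * (n - 2) := by
    have h2 : 2 * (n * f) = 2 * (e * (n - 2)) := by
      calc 2 * (n * f) = n * (2 * f) := by ring
        _ = n * ((n - 1) * (n - 2)) := by rw [hf']
        _ = (n * (n - 1)) * (n - 2) := by ring
        _ = (2 * e) * (n - 2) := by rw [he']
        _ = 2 * (e * (n - 2)) := by ring
    omega
  simp only [Nat.choose_one_right, Nat.choose_two_right, fBound]
  rw [hB, hC, hD, hA, hE, hF, he']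
  ring


lemma V_card (hn : 3 ≤ n) : (V n).card = fBound n := by
  rw [cover (by omega), Finset.card_insert_of_notMem zero_not_mem,
    Finset.card_image_of_injOn psi_injOn]
  have := W_card hn
  omega

def phi (t : Fin n → ℂˣ) (v : Fin n → ℤ) : ℂˣ := ∏ i, t i ^ v i

lemma prod_E (t : Fin n → ℂˣ) (x : Fin n) : (∏ i, t i ^ (E x i)) = t x := by
  rw [Finset.prod_eq_single x (fun i _ hne => by simp [E, hne]) (by simp)]
  simp [E]

lemma phi_g (t : Fin n → ℂˣ) (q : Quad n) :
    phi t (g q) = (t q.1 / t q.2.1) / (t q.2.2.1 / t q.2.2.2) := by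
  obtain ⟨a, b, c, d⟩ := q
  simp only [phi, g]
  have : ∀ i, t i ^ (E a i + E d i - E b i - E c i)
      = t i ^ (E a i) * t i ^ (E d i) / t i ^ (E b i) / t i ^ (E c i) := by
    intro i
    rw [zpow_sub, zpow_sub, zpow_add]
    simp [div_eq_mul_inv]
  rw [Finset.prod_congr rfl (fun i _ => this i), Finset.prod_div_distrib,
    Finset.prod_div_distrib, Finset.prod_mul_distrib, prod_E, prod_E, prod_E, prod_E]
  simp [div_eq_mul_inv, mul_comm, mul_assoc, mul_left_comm]

noncomputable def mper (q q' : Quad n) : MvPolynomial (Fin n) ℂ :=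
  MvPolynomial.X q.1 * MvPolynomial.X q.2.2.2 * MvPolynomial.X q'.2.1 * MvPolynomial.X q'.2.2.1
    - (MvPolynomial.X q'.1 * MvPolynomial.X q'.2.2.2 * MvPolynomial.X q.2.1
        * MvPolynomial.X q.2.2.1)

lemma single_coord (x i : Fin n) :
    ((Finsupp.single x (1 : ℕ)) i : ℤ) = E x i := by
  rw [Finsupp.single_apply, E]
  split_ifs with h1 h2 h2 <;> simp_all <;> omega

lemma mper_ne_zero {q q' : Quad n} (h : g q ≠ g q') : mper q q' ≠ 0 := by
  obtain ⟨a, b, c, d⟩ := q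
  obtain ⟨a', b', c', d'⟩ := q'
  have hmono : (Finsupp.single a 1 + Finsupp.single d 1 + Finsupp.single b' 1
      + Finsupp.single c' 1 : Fin n →₀ ℕ)
      ≠ Finsupp.single a' 1 + Finsupp.single d' 1 + Finsupp.single b 1 + Finsupp.single c 1 := by
    intro heq
    apply h
    funext i
    have hi := DFunLike.congr_fun heq i
    simp only [Finsupp.add_apply] at hi
    have hi' : ((Finsupp.single a 1 i : ℕ) : ℤ) + (Finsupp.single d 1 i : ℕ)
        + (Finsupp.single b' 1 i : ℕ) + (Finsupp.single c' 1 i : ℕ)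
        = ((Finsupp.single a' 1 i : ℕ) : ℤ) + (Finsupp.single d' 1 i : ℕ)
        + (Finsupp.single b 1 i : ℕ) + (Finsupp.single c 1 i : ℕ) := by
      exact_mod_cast hi
    simp only [single_coord] at hi'
    simp only [g]
    omega
  have hX : ∀ (u v w z : Fin n), (MvPolynomial.X u * MvPolynomial.X v * MvPolynomial.X w
      * MvPolynomial.X z : MvPolynomial (Fin n) ℂ)
      = MvPolynomial.monomial (Finsupp.single u 1 + Finsupp.single v 1 + Finsupp.single w 1
          + Finsupp.single z 1) 1 := by
    intro u v w z
    rw [MvPolynomial.X, MvPolynomial.X, MvPolynomial.X, MvPolynomial.X,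
      MvPolynomial.monomial_mul, MvPolynomial.monomial_mul, MvPolynomial.monomial_mul]
    norm_num
  rw [mper, hX, hX, sub_ne_zero]
  intro heq
  rcases (MvPolynomial.monomial_eq_monomial_iff _ _ _ _).mp heq with ⟨h1, -⟩ | ⟨h1, -⟩
  · exact hmono h1
  · exact one_ne_zero h1

noncomputable def pp (n : ℕ) : MvPolynomial (Fin n) ℂ :=
  ∏ z ∈ (Finset.univ ×ˢ Finset.univ : Finset (Quad n × Quad n)).filter
      (fun z => g z.1 ≠ g z.2), mper z.1 z.2

lemma pp_ne_zero : pp n ≠ 0 := by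
  rw [pp]
  rw [Finset.prod_ne_zero_iff]
  exact fun z hz => mper_ne_zero (Finset.mem_filter.mp hz).2

lemma factor_eval_ne_zero {t : Fin n → ℂˣ}
    (hp : MvPolynomial.eval (fun i => (t i : ℂ)) (pp n) ≠ 0)
    {q q' : Quad n} (h : g q ≠ g q') :
    MvPolynomial.eval (fun i => (t i : ℂ)) (mper q q') ≠ 0 := by
  intro h0
  apply hp
  rw [pp, map_prod]
  apply Finset.prod_eq_zero (i := (q, q')) (Finset.mem_filter.mpr
    ⟨Finset.mem_product.mpr ⟨Finset.mem_univ _, Finset.mem_univ _⟩, h⟩)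
  exact h0

lemma phi_injOn {t : Fin n → ℂˣ}
    (hp : MvPolynomial.eval (fun i => (t i : ℂ)) (pp n) ≠ 0) :
    Set.InjOn (phi t) (V n) := by
  intro v hv v' hv' heq
  obtain ⟨q, -, rfl⟩ := Finset.mem_image.mp hv
  obtain ⟨q', -, rfl⟩ := Finset.mem_image.mp hv'
  by_contra hne
  apply factor_eval_ne_zero hp hne
  obtain ⟨a, b, c, d⟩ := q
  obtain ⟨a', b', c', d'⟩ := q'
  rw [phi_g, phi_g] at heq
  have heqc : ((t a : ℂ) / t b) / ((t c : ℂ) / t d)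
      = ((t a' : ℂ) / t b') / ((t c' : ℂ) / t d') := by
    exact_mod_cast congrArg (Units.val) heq
  simp only [mper, map_sub, map_mul, MvPolynomial.eval_X]
  have hb := (t b).ne_zero
  have hc := (t c).ne_zero
  have hb' := (t b').ne_zero
  have hc' := (t c').ne_zero
  have hd := (t d).ne_zero
  have hd' := (t d').ne_zero
  field_simp at heqc
  linear_combination heqc

theorem main (hn : 3 ≤ n) (t : Fin n → ℂˣ)
    (hp : MvPolynomial.eval (fun i => (t i : ℂ)) (pp n) ≠ 0) :
    ((((Finset.univ.image t) / (Finset.univ.image t)) /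
        ((Finset.univ.image t) / (Finset.univ.image t)) : Finset ℂˣ)).card = fBound n := by
  have himg : (((Finset.univ.image t) / (Finset.univ.image t)) /
        ((Finset.univ.image t) / (Finset.univ.image t)) : Finset ℂˣ)
      = Finset.image (fun q : Quad n => (t q.1 / t q.2.1) / (t q.2.2.1 / t q.2.2.2))
          Finset.univ := by
    ext x
    simp only [Finset.mem_div, Finset.mem_image, Finset.mem_univ, true_and]
    constructor
    · rintro ⟨u, ⟨p1, ⟨a, rfl⟩, p2, ⟨b, rfl⟩, rfl⟩, w, ⟨p3, ⟨c, rfl⟩, p4, ⟨d, rfl⟩, rfl⟩, rfl⟩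
      exact ⟨(a, b, c, d), rfl⟩
    · rintro ⟨⟨a, b, c, d⟩, rfl⟩
      exact ⟨t a / t b, ⟨t a, ⟨a, rfl⟩, t b, ⟨b, rfl⟩, rfl⟩,
        t c / t d, ⟨t c, ⟨c, rfl⟩, t d, ⟨d, rfl⟩, rfl⟩, rfl⟩
  rw [himg]
  have h2 : Finset.image (fun q : Quad n => (t q.1 / t q.2.1) / (t q.2.2.1 / t q.2.2.2))
      Finset.univ = Finset.image (phi t) (V n) := by
    rw [V, Finset.image_image]
    exact Finset.image_congr (fun q _ => (phi_g t q).symm)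
  rw [h2, Finset.card_image_of_injOn (phi_injOn hp), V_card hn]


end VR

/-- For every `n ≥ 3` there is a nonzero polynomial `p` in `n` variables
over `ℂ` such that every tuple `t ∈ (ℂˣ)ⁿ` with `p(t) ≠ 0` has `|δ²{t₁,…,tₙ}| = f(n)`;
i.e. the set of very regular elements contains a nonempty Zariski open set. -/
theorem very_regular_zariski_open (n : ℕ) (hn : 3 ≤ n) :
    ∃ p : MvPolynomial (Fin n) ℂ, p ≠ 0 ∧
      ∀ t : Fin n → ℂˣ, MvPolynomial.eval (fun i => (t i : ℂ)) p ≠ 0 →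
        ((((Finset.univ.image t) / (Finset.univ.image t)) /
            ((Finset.univ.image t) / (Finset.univ.image t)) : Finset ℂˣ)).card = fBound n :=
  ⟨VR.pp n, VR.pp_ne_zero, fun t hp => VR.main hn t hp⟩
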